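/- Support property of the intertwined cap indicator (G = Z_2^{d+1}): for x, y ∈ S^d and 0 < θ ≤ π, if ⟨x̄, ȳ⟩ < cos θ, where x̄ = (|x_1|,…,|x_{d+1}|) and ȳ = (|y_1|,…,|y_{d+1}|), then V_κ[χ_{c(x,θ)}](y) = 0. -/

import Mathlib

open MeasureTheory Real Filter Set

noncomputable section

/-- The unit sphere `S^d` in `ℝ^{d+1}`. -/
abbrev Sph (d : ℕ) := Metric.sphere (0 : EuclideanSpace ℝ (Fin (d+1))) 1

/-- The surface (Lebesgue) measure `dω` on `S^d`. -/
def sphMeasure (d : ℕ) : Measure (Sph d) :=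
  (volume : Measure (EuclideanSpace ℝ (Fin (d+1)))).toSphere

/-- The weight function `h_κ(x) = ∏_i |x_i|^{κ_i}`. -/
def hkw {d : ℕ} (κ : Fin (d+1) → ℝ) (x : EuclideanSpace ℝ (Fin (d+1))) : ℝ :=
  ∏ i, |x i| ^ κ i

/-- The normalization constant `a_κ`, with `a_κ⁻¹ = ∫_{S^d} h_κ² dω`. -/
def aK {d : ℕ} (κ : Fin (d+1) → ℝ) : ℝ :=
  (∫ y : Sph d, hkw κ (y : EuclideanSpace ℝ (Fin (d+1))) ^ 2 ∂sphMeasure d)⁻¹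

/-- The norm `‖f‖_{κ,1} = a_κ ∫_{S^d} |f| h_κ² dω`. -/
def normK1 {d : ℕ} (κ : Fin (d+1) → ℝ) (f : Sph d → ℝ) : ℝ :=
  aK κ * ∫ y : Sph d, |f y| * hkw κ (y : EuclideanSpace ℝ (Fin (d+1))) ^ 2 ∂sphMeasure d

/-- `f ∈ L¹(h_κ² dω)`. -/
def MemL1K {d : ℕ} (κ : Fin (d+1) → ℝ) (f : Sph d → ℝ) : Prop :=
  Integrable (fun y : Sph d => f y * hkw κ (y : EuclideanSpace ℝ (Fin (d+1))) ^ 2)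
    (sphMeasure d)

/-- The intertwining operator `V_κ` for the group `Z_2^{d+1}`:
`V_κ g(x) = c_κ ∫_{[-1,1]^{d+1}} g(x₁t₁,…,x_{d+1}t_{d+1}) ∏ (1+tᵢ)(1-tᵢ²)^{κᵢ-1} dt`. -/
def Vk {d : ℕ} (κ : Fin (d+1) → ℝ) (g : EuclideanSpace ℝ (Fin (d+1)) → ℝ)
    (x : EuclideanSpace ℝ (Fin (d+1))) : ℝ :=
  (∫ t in Set.univ.pi fun _ : Fin (d+1) => Icc (-1:ℝ) 1,
      ∏ i, (1 + t i) * (1 - t i ^ 2) ^ (κ i - 1))⁻¹ *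
  ∫ t in Set.univ.pi fun _ : Fin (d+1) => Icc (-1:ℝ) 1,
      g (WithLp.toLp 2 (fun i => x i * t i)) * ∏ i, (1 + t i) * (1 - t i ^ 2) ^ (κ i - 1)

/-- The solid cap `c(x,θ) = {y : ‖y‖ ≤ 1, ⟨x,y⟩ ≥ cos θ}`. -/
def capSet {d : ℕ} (x : EuclideanSpace ℝ (Fin (d+1))) (θ : ℝ) :
    Set (EuclideanSpace ℝ (Fin (d+1))) :=
  {y | ‖y‖ ≤ 1 ∧ Real.cos θ ≤ inner ℝ x y}

/-- `∫_{S^d} f(y) V_κ[χ_{c(x,θ)}](y) h_κ²(y) dω(y)`. -/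
def capInt {d : ℕ} (κ : Fin (d+1) → ℝ) (f : Sph d → ℝ)
    (x : EuclideanSpace ℝ (Fin (d+1))) (θ : ℝ) : ℝ :=
  ∫ y : Sph d, f y * Vk κ ((capSet x θ).indicator fun _ => (1:ℝ))
      (y : EuclideanSpace ℝ (Fin (d+1)))
    * hkw κ (y : EuclideanSpace ℝ (Fin (d+1))) ^ 2 ∂sphMeasure d

/-- The maximal function `M_κ f`. -/
def maxK {d : ℕ} (κ : Fin (d+1) → ℝ) (f : Sph d → ℝ) (x : Sph d) : ℝ :=
  ⨆ θ ∈ Ioc (0:ℝ) π,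
    capInt κ (fun y => |f y|) (x : EuclideanSpace ℝ (Fin (d+1))) θ /
      capInt κ (fun _ => (1:ℝ)) (x : EuclideanSpace ℝ (Fin (d+1))) θ


theorem statement8 (d : ℕ) (hd : 1 ≤ d) (κ : Fin (d+1) → ℝ) (hκ : ∀ i, 0 < κ i)
    (x y : Sph d) (θ : ℝ) (hθ : θ ∈ Ioc (0:ℝ) π)
    (h : ∑ i, |(x : EuclideanSpace ℝ (Fin (d+1))) i| *
          |(y : EuclideanSpace ℝ (Fin (d+1))) i| < Real.cos θ) :
    Vk κ ((capSet (x : EuclideanSpace ℝ (Fin (d+1))) θ).indicator fun _ => (1:ℝ))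
        (y : EuclideanSpace ℝ (Fin (d+1))) = 0 := by
  unfold Vk
  rw [mul_eq_zero]
  right
  apply MeasureTheory.setIntegral_eq_zero_of_forall_eq_zero
  intro t ht
  have hmem : WithLp.toLp 2 (fun i => (y : EuclideanSpace ℝ (Fin (d+1))) i * t i) ∉
      capSet (x : EuclideanSpace ℝ (Fin (d+1))) θ := by
    intro ⟨_, h2⟩
    have hinner : (inner ℝ (x : EuclideanSpace ℝ (Fin (d+1)))
        (WithLp.toLp 2 (fun i => (y : EuclideanSpace ℝ (Fin (d+1))) i * t i) :
          EuclideanSpace ℝ (Fin (d+1))) : ℝ)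
        ≤ ∑ i, |(x : EuclideanSpace ℝ (Fin (d+1))) i| *
            |(y : EuclideanSpace ℝ (Fin (d+1))) i| := by
      rw [PiLp.inner_apply]
      apply Finset.sum_le_sum
      intro i _
      have hti := ht i (Set.mem_univ i)
      have h1 : |t i| ≤ 1 := abs_le.mpr ⟨hti.1, hti.2⟩
      calc (inner ℝ ((x : EuclideanSpace ℝ (Fin (d+1))) i)
              ((y : EuclideanSpace ℝ (Fin (d+1))) i * t i) : ℝ)
          ≤ |(x : EuclideanSpace ℝ (Fin (d+1))) i *
              ((y : EuclideanSpace ℝ (Fin (d+1))) i * t i)| := by rw [Real.inner_apply]; exact le_abs_self _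
        _ = |(x : EuclideanSpace ℝ (Fin (d+1))) i| *
              (|(y : EuclideanSpace ℝ (Fin (d+1))) i| * |t i|) := by
            rw [abs_mul, abs_mul]
        _ ≤ |(x : EuclideanSpace ℝ (Fin (d+1))) i| *
              (|(y : EuclideanSpace ℝ (Fin (d+1))) i| * 1) := by
            gcongr
        _ = _ := by ring
    linarith
  rw [Set.indicator_of_notMem hmem, zero_mul]
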